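/- For all 1 ≤ i, j ≤ 4, x_i·H_j = x_j·H_i as 1×4 row vectors over S. -/

import Mathlib

open MvPolynomial

/-- Variables of the generic Tom: coefficients `a_{ij}^k` (the six pairs
`(i,j)`, `2 ≤ i < j ≤ 5`, indexed by `Fin 6` in the order
`23, 24, 25, 34, 35, 45`), and the variables `x_1, …, x_4`, `z_1, …, z_4`. -/
abbrev TomVars : Type := (Fin 6 × Fin 4) ⊕ (Fin 4 ⊕ Fin 4)

/-- The polynomial ring `S = ℤ[a_{ij}^k, x_k, z_k]` in the 32 indeterminates. -/
abbrev TomS : Type := MvPolynomial TomVars ℤ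

/-- The variable `x_{k+1}`. -/
noncomputable def tomX (k : Fin 4) : TomS := X (Sum.inr (Sum.inl k))

/-- The variable `z_{k+1}`. -/
noncomputable def tomZ (k : Fin 4) : TomS := X (Sum.inr (Sum.inr k))

/-- The variable `a_{ij}^{k+1}`, with the pair `(i,j)` indexed by `Fin 6`
in the order `23, 24, 25, 34, 35, 45`. -/
noncomputable def tomAC (p : Fin 6) (k : Fin 4) : TomS := X (Sum.inl (p, k))

/-- The entry `a_{ij} = ∑ k, a_{ij}^k z_k`. -/
noncomputable def tomA (p : Fin 6) : TomS := ∑ k : Fin 4, tomAC p k * tomZ k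

/-- The Pfaffians `P_1, P_2, P_3, P_4` of the generic Tom matrix. -/
noncomputable def tomP (i : Fin 4) : TomS :=
  ![tomX 1 * tomA 5 - tomX 2 * tomA 4 + tomX 3 * tomA 3,
    tomX 0 * tomA 5 - tomX 2 * tomA 2 + tomX 3 * tomA 1,
    tomX 0 * tomA 4 - tomX 1 * tomA 2 + tomX 3 * tomA 0,
    tomX 0 * tomA 3 - tomX 1 * tomA 1 + tomX 2 * tomA 0] i

/-- The `4 × 4` matrix `Q` with `Q_{1k} = x₂a₄₅ᵏ − x₃a₃₅ᵏ + x₄a₃₄ᵏ`, etc. -/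
noncomputable def tomQ : Matrix (Fin 4) (Fin 4) TomS :=
  Matrix.of
    ![fun k => tomX 1 * tomAC 5 k - tomX 2 * tomAC 4 k + tomX 3 * tomAC 3 k,
      fun k => tomX 0 * tomAC 5 k - tomX 2 * tomAC 2 k + tomX 3 * tomAC 1 k,
      fun k => tomX 0 * tomAC 4 k - tomX 1 * tomAC 2 k + tomX 3 * tomAC 0 k,
      fun k => tomX 0 * tomAC 3 k - tomX 1 * tomAC 1 k + tomX 2 * tomAC 0 k]

/-- The row vector `H_i`: the `m`-th entry is `(-1)^(m+1)` times the
determinant of the `3 × 3` submatrix of `Q̂_i` (the matrix `Q` with the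
`i`-th row deleted) obtained by deleting the `m`-th column (0-indexed, the
sign is `(-1)^(m : ℕ)`). -/
noncomputable def tomH (i : Fin 4) (m : Fin 4) : TomS :=
  (-1 : TomS) ^ (m : ℕ) * (tomQ.submatrix i.succAbove m.succAbove).det

lemma fin4_cases {P : Fin 4 → Prop} (h0 : P 0) (h1 : P 1) (h2 : P 2) (h3 : P 3) :
    ∀ i, P i := by
  intro i
  match i with
  | 0 => exact h0
  | 1 => exact h1
  | 2 => exact h2
  | 3 => exact h3

lemma fv0 : ((0 : Fin 4) : ℕ) = 0 := rfl
lemma fv1 : ((1 : Fin 4) : ℕ) = 1 := rfl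
lemma fv2 : ((2 : Fin 4) : ℕ) = 2 := rfl
lemma fv3 : ((3 : Fin 4) : ℕ) = 3 := rfl
lemma fc0 : Fin.castSucc (0 : Fin 3) = (0 : Fin 4) := rfl
lemma fc1 : Fin.castSucc (1 : Fin 3) = (1 : Fin 4) := rfl
lemma fc2 : Fin.castSucc (2 : Fin 3) = (2 : Fin 4) := rfl
lemma fs0 : Fin.succ (0 : Fin 3) = (1 : Fin 4) := rfl
lemma fs1 : Fin.succ (1 : Fin 3) = (2 : Fin 4) := rfl
lemma fs2 : Fin.succ (2 : Fin 3) = (3 : Fin 4) := rfl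

set_option maxHeartbeats 4000000 in
/-- For all `1 ≤ i, j ≤ 4`, `x_i·H_j = x_j·H_i` as `1 × 4`
row vectors over `S`. -/
theorem stmt_6 :
    ∀ i j : Fin 4, ∀ m : Fin 4, tomX i * tomH j m = tomX j * tomH i m := by
  apply fin4_cases <;> apply fin4_cases <;> apply fin4_cases <;>
    · simp only [tomH, tomQ, Matrix.det_fin_three, Matrix.submatrix_apply,
        Fin.succAbove, Fin.lt_def, fc0, fc1, fc2, fs0, fs1, fs2, fv0, fv1, fv2, fv3,
        Matrix.of_apply]
      try simp [Matrix.cons_val_three, Matrix.vecHead, Matrix.vecTail]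
      try norm_num
      try ring
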